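/- Let X be a measurable space, ℋ a real Hilbert space, φ : X → ℋ a measurable feature map with kernel k(x,x') = ⟨φ(x), φ(x')⟩, and P, Q probability measures on X with E_{x∼P}[‖φ(x)‖²] and E_{y∼Q}[‖φ(y)‖²] finite. Let x_1, …, x_n be i.i.d. from P and y_1, …, y_m be i.i.d. from Q, mutually independent, with n, m ≥ 2. Then the unbiased estimator (1/(n(n−1)))·Σ_{i≠j} k(x_i, x_j) + (1/(m(m−1)))·Σ_{i≠j} k(y_i, y_j) − (2/(nm))·Σ_{i=1}^n Σ_{j=1}^m k(x_i, y_j) has expectation exactly MMD²(P,Q) = ‖μ_P − μ_Q‖²_ℋ. -/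

import Mathlib

open MeasureTheory
open scoped RealInnerProductSpace ENNReal

section MMDAux

variable {X ℋ : Type*} [MeasurableSpace X]
  [NormedAddCommGroup ℋ] [InnerProductSpace ℝ ℋ] [CompleteSpace ℋ]

private lemma mmd_pi_map_eval {n : ℕ} (P : Measure X) [IsProbabilityMeasure P] (i : Fin n) :
    (Measure.pi fun _ : Fin n => P).map (fun x => x i) = P := by
  ext s hs
  rw [Measure.map_apply (measurable_pi_apply i) hs]
  have hpre : (fun x : Fin n → X => x i) ⁻¹' s =
      Set.pi Set.univ (Function.update (fun _ => Set.univ) i s) := by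
    ext x
    simp only [Set.mem_preimage, Set.mem_univ_pi]
    constructor
    · intro h k
      rcases eq_or_ne k i with rfl | hki
      · simpa using h
      · rw [Function.update_of_ne hki]; trivial
    · intro h
      have := h i
      rwa [Function.update_self] at this
  rw [hpre, Measure.pi_pi]
  have hfun : (fun k : Fin n => P (Function.update (fun _ => Set.univ) i s k)) =
      Function.update (fun _ : Fin n => (1 : ℝ≥0∞)) i (P s) := by
    funext k
    rcases eq_or_ne k i with rfl | hki
    · simp
    · simp [Function.update_of_ne hki]
  rw [hfun, Finset.prod_update_of_mem (Finset.mem_univ i)]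
  simp

private lemma mmd_pi_map_pair {n : ℕ} (P : Measure X) [IsProbabilityMeasure P]
    {i j : Fin n} (hij : i ≠ j) :
    (Measure.pi fun _ : Fin n => P).map (fun x => (x i, x j)) = P.prod P := by
  refine (Measure.prod_eq fun s t hs ht => ?_).symm
  rw [Measure.map_apply ((measurable_pi_apply i).prodMk (measurable_pi_apply j)) (hs.prod ht)]
  have hpre : (fun x : Fin n → X => (x i, x j)) ⁻¹' s ×ˢ t =
      Set.pi Set.univ (Function.update (Function.update (fun _ => Set.univ) i s) j t) := by
    ext x
    simp only [Set.mem_preimage, Set.mem_prod, Set.mem_univ_pi]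
    constructor
    · rintro ⟨h1, h2⟩ k
      rcases eq_or_ne k j with rfl | hkj
      · simpa using h2
      · rcases eq_or_ne k i with rfl | hki
        · rw [Function.update_of_ne hkj, Function.update_self]; exact h1
        · rw [Function.update_of_ne hkj, Function.update_of_ne hki]; trivial
    · intro h
      refine ⟨?_, ?_⟩
      · have := h i
        rwa [Function.update_of_ne hij, Function.update_self] at this
      · have := h j
        rwa [Function.update_self] at this
  rw [hpre, Measure.pi_pi]
  have hfun : (fun k : Fin n =>
        P (Function.update (Function.update (fun _ => Set.univ) i s) j t k)) =
      Function.update (Function.update (fun _ : Fin n => (1 : ℝ≥0∞)) i (P s)) j (P t) := by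
    funext k
    rcases eq_or_ne k j with rfl | hkj
    · simp
    · rcases eq_or_ne k i with rfl | hki
      · simp [Function.update_of_ne hkj]
      · simp [Function.update_of_ne hkj, Function.update_of_ne hki]
  rw [hfun, Finset.prod_update_of_mem (Finset.mem_univ j),
    Finset.prod_update_of_mem (Finset.mem_sdiff.mpr ⟨Finset.mem_univ i, by simp [hij]⟩)]
  rw [Finset.prod_const_one, mul_one, mul_comm]

private lemma mmd_key {Ω : Type*} [MeasurableSpace Ω] (ρ : Measure Ω)
    (μ ν : Measure X) [IsProbabilityMeasure μ] [IsProbabilityMeasure ν]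
    (φ : X → ℋ) (h1 : Integrable φ μ) (h2 : Integrable φ ν)
    (T : Ω → X × X) (hT : Measurable T) (hmap : ρ.map T = μ.prod ν) :
    Integrable (fun ω => ⟪φ (T ω).1, φ (T ω).2⟫) ρ ∧
      ∫ ω, ⟪φ (T ω).1, φ (T ω).2⟫ ∂ρ = ⟪∫ x, φ x ∂μ, ∫ x, φ x ∂ν⟫ := by
  have hfst : AEStronglyMeasurable (fun z : X × X => φ z.1) (μ.prod ν) := by
    have hm : (μ.prod ν).map Prod.fst = μ := by simp
    have h := h1.1
    rw [← hm] at h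
    exact h.comp_measurable measurable_fst
  have hsnd : AEStronglyMeasurable (fun z : X × X => φ z.2) (μ.prod ν) := by
    have hm : (μ.prod ν).map Prod.snd = ν := by simp
    have h := h2.1
    rw [← hm] at h
    exact h.comp_measurable measurable_snd
  have hg : AEStronglyMeasurable (fun z : X × X => ⟪φ z.1, φ z.2⟫) (μ.prod ν) :=
    hfst.inner hsnd
  have hint : Integrable (fun z : X × X => ⟪φ z.1, φ z.2⟫) (μ.prod ν) := by
    refine Integrable.mono (h1.norm.mul_prod h2.norm) hg ?_
    filter_upwards with z
    refine (norm_inner_le_norm (𝕜 := ℝ) _ _).trans ?_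
    rw [Real.norm_eq_abs]
    exact le_abs_self _
  have hval : ∫ z : X × X, ⟪φ z.1, φ z.2⟫ ∂(μ.prod ν) = ⟪∫ x, φ x ∂μ, ∫ x, φ x ∂ν⟫ := by
    rw [MeasureTheory.integral_prod _ hint]
    have e1 : ∀ x, (∫ y, ⟪φ x, φ y⟫ ∂ν) = ⟪φ x, ∫ y, φ y ∂ν⟫ := fun x => integral_inner h2 _
    simp_rw [e1]
    have e2 : (fun x => ⟪φ x, ∫ y, φ y ∂ν⟫) = fun x => ⟪∫ y, φ y ∂ν, φ x⟫ :=
      funext fun x => real_inner_comm _ _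
    rw [e2, integral_inner h1, real_inner_comm]
  have hg' : AEStronglyMeasurable (fun z : X × X => ⟪φ z.1, φ z.2⟫) (ρ.map T) := by
    rwa [hmap]
  constructor
  · exact (integrable_map_measure hg' hT.aemeasurable).mp (by rwa [hmap])
  · have hi := integral_map hT.aemeasurable hg'
    rw [hmap] at hi
    exact hi.symm.trans hval

end MMDAux

/-- The unbiased empirical MMD² estimator (U-statistic form) has expectation
exactly MMD²(P,Q) = ‖μ_P − μ_Q‖² for independent i.i.d. samples x ∼ P^n,
y ∼ Q^m with n, m ≥ 2. -/
theorem unbiased_mmd_estimator_expectation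
    {X ℋ : Type*} [MeasurableSpace X]
    [NormedAddCommGroup ℋ] [InnerProductSpace ℝ ℋ] [CompleteSpace ℋ]
    [MeasurableSpace ℋ] [BorelSpace ℋ]
    (φ : X → ℋ) (hφ : Measurable φ)
    (P Q : Measure X) [IsProbabilityMeasure P] [IsProbabilityMeasure Q]
    (hPint : Integrable φ P) (hQint : Integrable φ Q)
    (hP2 : Integrable (fun x => ‖φ x‖ ^ 2) P)
    (hQ2 : Integrable (fun y => ‖φ y‖ ^ 2) Q)
    (n m : ℕ) (hn : 2 ≤ n) (hm : 2 ≤ m) :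
    (∫ s : (Fin n → X) × (Fin m → X),
        ((n * (n - 1) : ℝ))⁻¹ *
            (∑ p ∈ (Finset.univ : Finset (Fin n × Fin n)).filter
                (fun p => p.1 ≠ p.2), ⟪φ (s.1 p.1), φ (s.1 p.2)⟫) +
          ((m * (m - 1) : ℝ))⁻¹ *
            (∑ p ∈ (Finset.univ : Finset (Fin m × Fin m)).filter
                (fun p => p.1 ≠ p.2), ⟪φ (s.2 p.1), φ (s.2 p.2)⟫) -
          (2 / ((n : ℝ) * m)) *
            (∑ i : Fin n, ∑ j : Fin m, ⟪φ (s.1 i), φ (s.2 j)⟫)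
        ∂((Measure.pi fun _ : Fin n => P).prod
            (Measure.pi fun _ : Fin m => Q))) =
      ‖(∫ x, φ x ∂P) - (∫ y, φ y ∂Q)‖ ^ 2 := by
  classical
  set πP := Measure.pi fun _ : Fin n => P with hπP
  set πQ := Measure.pi fun _ : Fin m => Q with hπQ
  set μbig := πP.prod πQ with hμbig
  have hfstmap : μbig.map Prod.fst = πP := by simp [hμbig]
  have hsndmap : μbig.map Prod.snd = πQ := by simp [hμbig]
  -- key facts for each within-P pair
  have keyP : ∀ p : Fin n × Fin n, p.1 ≠ p.2 →
      Integrable (fun s : (Fin n → X) × (Fin m → X) => ⟪φ (s.1 p.1), φ (s.1 p.2)⟫) μbig ∧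
        ∫ s : (Fin n → X) × (Fin m → X), ⟪φ (s.1 p.1), φ (s.1 p.2)⟫ ∂μbig =
          ⟪∫ x, φ x ∂P, ∫ x, φ x ∂P⟫ := by
    intro p hp
    refine mmd_key μbig P P φ hPint hPint
      (fun s => (s.1 p.1, s.1 p.2))
      (((measurable_pi_apply p.1).comp measurable_fst).prodMk
        ((measurable_pi_apply p.2).comp measurable_fst)) ?_
    have hc : (fun s : (Fin n → X) × (Fin m → X) => (s.1 p.1, s.1 p.2)) =
        (fun x : Fin n → X => (x p.1, x p.2)) ∘ Prod.fst := rfl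
    rw [hc, ← Measure.map_map
      ((measurable_pi_apply p.1).prodMk (measurable_pi_apply p.2)) measurable_fst,
      hfstmap, mmd_pi_map_pair P hp]
  have keyQ : ∀ p : Fin m × Fin m, p.1 ≠ p.2 →
      Integrable (fun s : (Fin n → X) × (Fin m → X) => ⟪φ (s.2 p.1), φ (s.2 p.2)⟫) μbig ∧
        ∫ s : (Fin n → X) × (Fin m → X), ⟪φ (s.2 p.1), φ (s.2 p.2)⟫ ∂μbig =
          ⟪∫ y, φ y ∂Q, ∫ y, φ y ∂Q⟫ := by
    intro p hp
    refine mmd_key μbig Q Q φ hQint hQint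
      (fun s => (s.2 p.1, s.2 p.2))
      (((measurable_pi_apply p.1).comp measurable_snd).prodMk
        ((measurable_pi_apply p.2).comp measurable_snd)) ?_
    have hc : (fun s : (Fin n → X) × (Fin m → X) => (s.2 p.1, s.2 p.2)) =
        (fun y : Fin m → X => (y p.1, y p.2)) ∘ Prod.snd := rfl
    rw [hc, ← Measure.map_map
      ((measurable_pi_apply p.1).prodMk (measurable_pi_apply p.2)) measurable_snd,
      hsndmap, mmd_pi_map_pair Q hp]
  have keyC : ∀ (i : Fin n) (j : Fin m),
      Integrable (fun s : (Fin n → X) × (Fin m → X) => ⟪φ (s.1 i), φ (s.2 j)⟫) μbig ∧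
        ∫ s : (Fin n → X) × (Fin m → X), ⟪φ (s.1 i), φ (s.2 j)⟫ ∂μbig =
          ⟪∫ x, φ x ∂P, ∫ y, φ y ∂Q⟫ := by
    intro i j
    refine mmd_key μbig P Q φ hPint hQint
      (fun s => (s.1 i, s.2 j))
      (((measurable_pi_apply i).comp measurable_fst).prodMk
        ((measurable_pi_apply j).comp measurable_snd)) ?_
    have hc : (fun s : (Fin n → X) × (Fin m → X) => (s.1 i, s.2 j)) =
        Prod.map (fun x : Fin n → X => x i) (fun y : Fin m → X => y j) := rfl
    rw [hc, ← Measure.map_prod_map _ _ (measurable_pi_apply i) (measurable_pi_apply j),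
      mmd_pi_map_eval, mmd_pi_map_eval]
  -- cardinality of the off-diagonal set
  have card_off : ∀ k : ℕ,
      ((Finset.univ : Finset (Fin k × Fin k)).filter (fun p => p.1 ≠ p.2)).card = k * k - k := by
    intro k
    have hdiag : ((Finset.univ : Finset (Fin k × Fin k)).filter (fun p => p.1 = p.2)).card = k := by
      have himg : ((Finset.univ : Finset (Fin k × Fin k)).filter (fun p => p.1 = p.2)) =
          (Finset.univ : Finset (Fin k)).image (fun i => (i, i)) := by
        ext ⟨a, b⟩
        simp only [Finset.mem_filter, Finset.mem_univ, true_and, Finset.mem_image, Prod.mk.injEq]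
        constructor
        · rintro rfl; exact ⟨a, rfl, rfl⟩
        · rintro ⟨i, rfl, rfl⟩; rfl
      rw [himg, Finset.card_image_of_injective _ (fun a b h => (Prod.mk.injEq _ _ _ _).mp h |>.1)]
      simp
    have hsd : ((Finset.univ : Finset (Fin k × Fin k)).filter (fun p => p.1 ≠ p.2)) =
        Finset.univ \ ((Finset.univ : Finset (Fin k × Fin k)).filter (fun p => p.1 = p.2)) := by
      ext p
      simp [ne_eq]
    rw [hsd, Finset.card_sdiff_of_subset (Finset.filter_subset _ _), hdiag]
    simp
  have hcard_cast : ∀ k : ℕ, 2 ≤ k → ((k * k - k : ℕ) : ℝ) = (k : ℝ) * ((k : ℝ) - 1) := by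
    intro k hk
    have h : k ≤ k * k := Nat.le_mul_of_pos_left k (by omega)
    push_cast [Nat.cast_sub h]
    ring
  -- the three integrals
  have sumP_int : Integrable (fun s : (Fin n → X) × (Fin m → X) =>
      ∑ p ∈ (Finset.univ : Finset (Fin n × Fin n)).filter (fun p => p.1 ≠ p.2),
        ⟪φ (s.1 p.1), φ (s.1 p.2)⟫) μbig :=
    integrable_finset_sum _ fun p hp => (keyP p (Finset.mem_filter.mp hp).2).1
  have sumQ_int : Integrable (fun s : (Fin n → X) × (Fin m → X) =>
      ∑ p ∈ (Finset.univ : Finset (Fin m × Fin m)).filter (fun p => p.1 ≠ p.2),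
        ⟪φ (s.2 p.1), φ (s.2 p.2)⟫) μbig :=
    integrable_finset_sum _ fun p hp => (keyQ p (Finset.mem_filter.mp hp).2).1
  have sumC_int : Integrable (fun s : (Fin n → X) × (Fin m → X) =>
      ∑ i : Fin n, ∑ j : Fin m, ⟪φ (s.1 i), φ (s.2 j)⟫) μbig :=
    integrable_finset_sum _ fun i _ => integrable_finset_sum _ fun j _ => (keyC i j).1
  have sumP_val : ∫ s : (Fin n → X) × (Fin m → X),
      (∑ p ∈ (Finset.univ : Finset (Fin n × Fin n)).filter (fun p => p.1 ≠ p.2),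
        ⟪φ (s.1 p.1), φ (s.1 p.2)⟫) ∂μbig =
      ((n : ℝ) * ((n : ℝ) - 1)) * ⟪∫ x, φ x ∂P, ∫ x, φ x ∂P⟫ := by
    rw [integral_finset_sum _ fun p hp => (keyP p (Finset.mem_filter.mp hp).2).1,
      Finset.sum_congr rfl fun p hp => (keyP p (Finset.mem_filter.mp hp).2).2,
      Finset.sum_const, card_off n, nsmul_eq_mul, hcard_cast n hn]
  have sumQ_val : ∫ s : (Fin n → X) × (Fin m → X),
      (∑ p ∈ (Finset.univ : Finset (Fin m × Fin m)).filter (fun p => p.1 ≠ p.2),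
        ⟪φ (s.2 p.1), φ (s.2 p.2)⟫) ∂μbig =
      ((m : ℝ) * ((m : ℝ) - 1)) * ⟪∫ y, φ y ∂Q, ∫ y, φ y ∂Q⟫ := by
    rw [integral_finset_sum _ fun p hp => (keyQ p (Finset.mem_filter.mp hp).2).1,
      Finset.sum_congr rfl fun p hp => (keyQ p (Finset.mem_filter.mp hp).2).2,
      Finset.sum_const, card_off m, nsmul_eq_mul, hcard_cast m hm]
  have sumC_val : ∫ s : (Fin n → X) × (Fin m → X),
      (∑ i : Fin n, ∑ j : Fin m, ⟪φ (s.1 i), φ (s.2 j)⟫) ∂μbig =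
      ((n : ℝ) * (m : ℝ)) * ⟪∫ x, φ x ∂P, ∫ y, φ y ∂Q⟫ := by
    rw [integral_finset_sum _ fun i _ => integrable_finset_sum _ fun j _ => (keyC i j).1]
    have : ∀ i : Fin n, ∫ s : (Fin n → X) × (Fin m → X),
        (∑ j : Fin m, ⟪φ (s.1 i), φ (s.2 j)⟫) ∂μbig =
        (m : ℝ) * ⟪∫ x, φ x ∂P, ∫ y, φ y ∂Q⟫ := by
      intro i
      rw [integral_finset_sum _ fun j _ => (keyC i j).1,
        Finset.sum_congr rfl fun j _ => (keyC i j).2, Finset.sum_const, nsmul_eq_mul]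
      simp
    rw [Finset.sum_congr rfl fun i _ => this i, Finset.sum_const, nsmul_eq_mul]
    simp [mul_assoc]
  -- put it together
  have hn0 : (n : ℝ) * ((n : ℝ) - 1) ≠ 0 := by
    have h1 : (2 : ℝ) ≤ (n : ℝ) := by exact_mod_cast hn
    have : (0 : ℝ) < (n : ℝ) * ((n : ℝ) - 1) := by nlinarith
    exact ne_of_gt this
  have hm0 : (m : ℝ) * ((m : ℝ) - 1) ≠ 0 := by
    have h1 : (2 : ℝ) ≤ (m : ℝ) := by exact_mod_cast hm
    have : (0 : ℝ) < (m : ℝ) * ((m : ℝ) - 1) := by nlinarith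
    exact ne_of_gt this
  have hnm0 : (n : ℝ) * (m : ℝ) ≠ 0 := by
    have h1 : (2 : ℝ) ≤ (n : ℝ) := by exact_mod_cast hn
    have h2 : (2 : ℝ) ≤ (m : ℝ) := by exact_mod_cast hm
    positivity
  have hPa : Integrable (fun s : (Fin n → X) × (Fin m → X) =>
      ((n * (n - 1) : ℝ))⁻¹ *
        (∑ p ∈ (Finset.univ : Finset (Fin n × Fin n)).filter (fun p => p.1 ≠ p.2),
          ⟪φ (s.1 p.1), φ (s.1 p.2)⟫)) μbig := sumP_int.const_mul _
  have hQa : Integrable (fun s : (Fin n → X) × (Fin m → X) =>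
      ((m * (m - 1) : ℝ))⁻¹ *
        (∑ p ∈ (Finset.univ : Finset (Fin m × Fin m)).filter (fun p => p.1 ≠ p.2),
          ⟪φ (s.2 p.1), φ (s.2 p.2)⟫)) μbig := sumQ_int.const_mul _
  have hCa : Integrable (fun s : (Fin n → X) × (Fin m → X) =>
      (2 / ((n : ℝ) * m)) * (∑ i : Fin n, ∑ j : Fin m, ⟪φ (s.1 i), φ (s.2 j)⟫)) μbig :=
    sumC_int.const_mul _
  have hPQa : Integrable (fun s : (Fin n → X) × (Fin m → X) =>
      ((n * (n - 1) : ℝ))⁻¹ *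
        (∑ p ∈ (Finset.univ : Finset (Fin n × Fin n)).filter (fun p => p.1 ≠ p.2),
          ⟪φ (s.1 p.1), φ (s.1 p.2)⟫) +
      ((m * (m - 1) : ℝ))⁻¹ *
        (∑ p ∈ (Finset.univ : Finset (Fin m × Fin m)).filter (fun p => p.1 ≠ p.2),
          ⟪φ (s.2 p.1), φ (s.2 p.2)⟫)) μbig := hPa.add hQa
  rw [integral_sub hPQa hCa, integral_add hPa hQa,
    integral_const_mul, integral_const_mul, integral_const_mul,
    sumP_val, sumQ_val, sumC_val]
  rw [inv_mul_cancel_left₀ hn0, inv_mul_cancel_left₀ hm0]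
  have hcross : 2 / ((n : ℝ) * m) * (((n : ℝ) * (m : ℝ)) * ⟪∫ x, φ x ∂P, ∫ y, φ y ∂Q⟫) =
      2 * ⟪∫ x, φ x ∂P, ∫ y, φ y ∂Q⟫ := by
    field_simp
  rw [hcross, real_inner_self_eq_norm_sq, real_inner_self_eq_norm_sq,
    @norm_sub_sq_real ℋ]
  ring
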